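/- Cocoercivity of Lipschitz gradients of convex functions (Baillon–Haddad): if Ω : E → ℝ is convex and differentiable with L-Lipschitz gradient (L > 0), then for all x, y ∈ E: ‖∇Ω(x) − ∇Ω(y)‖² ≤ L·⟨∇Ω(x) − ∇Ω(y), x − y⟩. -/

import Mathlib

open RealInnerProductSpace Set

section aux
variable {E : Type*} [NormedAddCommGroup E] [InnerProductSpace ℝ E] [CompleteSpace E]
  {Ω : E → ℝ} {gΩ : E → E}

-- derivative of t ↦ Ω (x + t • v)
lemma line_hasDerivAt (hΩ : ∀ x, HasGradientAt Ω (gΩ x) x) (x v : E) (t : ℝ) :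
    HasDerivAt (fun t : ℝ => Ω (x + t • v)) ⟪gΩ (x + t • v), v⟫ t := by
  have hline : HasDerivAt (fun t : ℝ => x + t • v) v t := by
    simpa using ((hasDerivAt_id t).smul_const v).const_add x
  have hF := (hasGradientAt_iff_hasFDerivAt.mp (hΩ (x + t • v))).comp_hasDerivAt t hline
  simpa [InnerProductSpace.toDual_apply_apply, Function.comp_def] using hF

/-- First-order condition for convexity. -/
lemma foc (hΩ : ∀ x, HasGradientAt Ω (gΩ x) x) (hconv : ConvexOn ℝ univ Ω) (x y : E) :
    Ω x + ⟪gΩ x, y - x⟫ ≤ Ω y := by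
  set v := y - x
  have hφ : ConvexOn ℝ univ (fun t : ℝ => Ω (x + t • v)) := by
    have := hconv.comp_affineMap (AffineMap.lineMap x y : ℝ →ᵃ[ℝ] E)
    simpa [Function.comp_def, AffineMap.lineMap_apply, v, add_comm] using this.subset (by simp) convex_univ
  have h := hφ.le_slope_of_hasDerivAt (mem_univ (0:ℝ)) (mem_univ (1:ℝ)) one_pos
    (line_hasDerivAt hΩ x v 0)
  simp [slope, v] at h
  linarith
end aux

section aux2
variable {E : Type*} [NormedAddCommGroup E] [InnerProductSpace ℝ E] [CompleteSpace E]
  {Ω : E → ℝ} {gΩ : E → E} {L : ℝ}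

/-- Descent lemma. -/
lemma descent (hΩ : ∀ x, HasGradientAt Ω (gΩ x) x) (hL : 0 < L)
    (hlip : ∀ x y, ‖gΩ x - gΩ y‖ ≤ L * ‖x - y‖) (x y : E) :
    Ω y ≤ Ω x + ⟪gΩ x, y - x⟫ + L / 2 * ‖y - x‖ ^ 2 := by
  set v := y - x with hv
  set ψ : ℝ → ℝ := fun t => Ω (x + t • v) - t * ⟪gΩ x, v⟫ - t ^ 2 * (L * ‖v‖ ^ 2) / 2 with hψ
  have hd : ∀ t : ℝ, HasDerivAt ψ
      (⟪gΩ (x + t • v), v⟫ - ⟪gΩ x, v⟫ - t * (L * ‖v‖ ^ 2)) t := by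
    intro t
    have h1 := line_hasDerivAt hΩ x v t
    have h2 : HasDerivAt (fun t : ℝ => t * ⟪gΩ x, v⟫) ⟪gΩ x, v⟫ t := by
      simpa using (hasDerivAt_id t).mul_const ⟪gΩ x, v⟫
    have h3 : HasDerivAt (fun t : ℝ => t ^ 2 * (L * ‖v‖ ^ 2) / 2)
        (t * (L * ‖v‖ ^ 2)) t := by
      have := ((hasDerivAt_pow 2 t).mul_const (L * ‖v‖ ^ 2)).div_const 2
      exact this.congr_deriv (by push_cast; ring)
    exact (h1.sub h2).sub h3
  have hanti : AntitoneOn ψ (Set.Icc 0 1) := by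
    apply antitoneOn_of_deriv_nonpos (convex_Icc 0 1)
    · exact Continuous.continuousOn (by
        have : Continuous ψ := by
          have : Differentiable ℝ ψ := fun t => (hd t).differentiableAt
          exact this.continuous
        exact this)
    · exact fun t _ => ((hd t).differentiableAt).differentiableWithinAt
    · intro t ht
      rw [interior_Icc] at ht
      rw [(hd t).deriv]
      have key : ⟪gΩ (x + t • v) - gΩ x, v⟫ ≤ t * (L * ‖v‖ ^ 2) := by
        calc ⟪gΩ (x + t • v) - gΩ x, v⟫ ≤ ‖gΩ (x + t • v) - gΩ x‖ * ‖v‖ :=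
              real_inner_le_norm _ _
          _ ≤ L * ‖x + t • v - x‖ * ‖v‖ := by
              have := hlip (x + t • v) x
              nlinarith [norm_nonneg v]
          _ = t * (L * ‖v‖ ^ 2) := by
              rw [show x + t • v - x = t • v by abel, norm_smul,
                Real.norm_eq_abs, abs_of_pos ht.1]
              ring
      have : ⟪gΩ (x + t • v) - gΩ x, v⟫ = ⟪gΩ (x + t • v), v⟫ - ⟪gΩ x, v⟫ := by
        rw [inner_sub_left]
      linarith
  have := hanti (Set.mem_Icc.mpr ⟨le_refl 0, zero_le_one⟩)
    (Set.mem_Icc.mpr ⟨zero_le_one, le_refl 1⟩) zero_le_one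
  simp only [hψ] at this
  simp at this
  have hxy : x + v = y := by simp [hv]
  rw [hxy] at this
  nlinarith
end aux2

section aux3
variable {E : Type*} [NormedAddCommGroup E] [InnerProductSpace ℝ E] [CompleteSpace E]
  {Ω : E → ℝ} {gΩ : E → E} {L : ℝ}

lemma key (hΩ : ∀ x, HasGradientAt Ω (gΩ x) x) (hconv : ConvexOn ℝ Set.univ Ω) (hL : 0 < L)
    (hlip : ∀ x y, ‖gΩ x - gΩ y‖ ≤ L * ‖x - y‖) (x y : E) :
    Ω x + ⟪gΩ x, y - x⟫ + 1 / (2 * L) * ‖gΩ y - gΩ x‖ ^ 2 ≤ Ω y := by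
  set u := gΩ y - gΩ x with hu
  set z := y - L⁻¹ • u with hz
  have h1 := foc hΩ hconv x z
  have h2 := descent hΩ hL hlip y z
  have hzy : z - y = -(L⁻¹ • u) := by rw [hz]; abel
  have hzx : z - x = (y - x) - L⁻¹ • u := by rw [hz]; abel
  have hnorm : ‖z - y‖ ^ 2 = L⁻¹ ^ 2 * ‖u‖ ^ 2 := by
    rw [hzy, norm_neg, norm_smul, Real.norm_eq_abs, abs_of_pos (inv_pos.mpr hL)]
    ring
  have hin1 : ⟪gΩ y, z - y⟫ = -(L⁻¹ * ⟪gΩ y, u⟫) := by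
    rw [hzy, inner_neg_right, real_inner_smul_right]
  have hin2 : ⟪gΩ x, z - x⟫ = ⟪gΩ x, y - x⟫ - L⁻¹ * ⟪gΩ x, u⟫ := by
    rw [hzx, inner_sub_right, real_inner_smul_right]
  have huu : ⟪gΩ y, u⟫ - ⟪gΩ x, u⟫ = ‖u‖ ^ 2 := by
    rw [← inner_sub_left, ← hu, real_inner_self_eq_norm_sq]
  rw [hin1] at h2
  rw [hin2] at h1
  have hLinv : L⁻¹ * L = 1 := inv_mul_cancel₀ hL.ne'
  rw [hnorm] at h2
  have h3 : L⁻¹ * ⟪gΩ y, u⟫ - L⁻¹ * ⟪gΩ x, u⟫ = L⁻¹ * ‖u‖ ^ 2 := by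
    rw [← mul_sub, huu]
  have h4 : L / 2 * (L⁻¹ ^ 2 * ‖u‖ ^ 2) = 1 / (2 * L) * ‖u‖ ^ 2 := by
    field_simp
  have h6 : L⁻¹ * ‖u‖ ^ 2 = 2 * (1 / (2 * L) * ‖u‖ ^ 2) := by
    field_simp
  linarith
end aux3

/-- Baillon–Haddad: cocoercivity of the `L`-Lipschitz gradient of a convex
function: `‖∇Ω x - ∇Ω y‖² ≤ L * ⟪∇Ω x - ∇Ω y, x - y⟫`. -/
theorem baillon_haddad_cocoercivity
    {E : Type*} [NormedAddCommGroup E] [InnerProductSpace ℝ E] [CompleteSpace E]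
    (Ω : E → ℝ) (gΩ : E → E) (hΩ : ∀ x, HasGradientAt Ω (gΩ x) x)
    (hconv : ConvexOn ℝ Set.univ Ω)
    (L : ℝ) (hL : 0 < L)
    (hlip : ∀ x y, ‖gΩ x - gΩ y‖ ≤ L * ‖x - y‖)
    (x y : E) :
    ‖gΩ x - gΩ y‖ ^ 2 ≤ L * ⟪gΩ x - gΩ y, x - y⟫ := by
  have k1 := key hΩ hconv hL hlip x y
  have k2 := key hΩ hconv hL hlip y x
  rw [norm_sub_rev] at k1
  have e1 : ⟪gΩ x - gΩ y, x - y⟫ = ⟪gΩ x, x - y⟫ - ⟪gΩ y, x - y⟫ := inner_sub_left _ _ _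
  have e2 : ⟪gΩ x, y - x⟫ = -⟪gΩ x, x - y⟫ := by
    rw [show y - x = -(x - y) by abel, inner_neg_right]
  have hfin : 1 / L * ‖gΩ x - gΩ y‖ ^ 2 ≤ ⟪gΩ x - gΩ y, x - y⟫ := by
    have h6 : 1 / L * ‖gΩ x - gΩ y‖ ^ 2 = 2 * (1 / (2 * L) * ‖gΩ x - gΩ y‖ ^ 2) := by
      field_simp
    linarith
  have := mul_le_mul_of_nonneg_left hfin hL.le
  have h7 : L * (1 / L * ‖gΩ x - gΩ y‖ ^ 2) = ‖gΩ x - gΩ y‖ ^ 2 := by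
    field_simp
  linarith
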